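/- arXiv:1901.08200 — 4 statements merged into one kernel-verified Lean document; each statement's English description precedes it below -/
import Mathlib

section
/- Fix a set S of L objects, each hashed by two independent uniformly random hash functions into a set of m cache nodes per layer. Then the probability that the neighborhood Γ(S) of S (the union of the 2L hash images) has size strictly less than L is at most (2eL/m)^L. -/
open Finset

namespace NeighborhoodAux

variable {m L : ℕ}

/-- Combine the two hash functions into one function on positions. -/
def hfun (q : (Fin L → Fin m) × (Fin L → Fin m)) (p : Fin L × Bool) : Fin m :=
  cond p.2 (q.2 p.1) (q.1 p.1)

/-- Positions whose value repeats an earlier value in the same layer. -/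
def repSet (q : (Fin L → Fin m) × (Fin L → Fin m)) : Finset (Fin L × Bool) :=
  univ.filter (fun p => ∃ j, j < p.1 ∧ hfun q (j, p.2) = hfun q p)

/-- A chosen subset of exactly `L` repeat positions (if there are at least `L`). -/
noncomputable def Tset (q : (Fin L → Fin m) × (Fin L → Fin m)) : Finset (Fin L × Bool) :=
  if hq : L ≤ (repSet q).card then (Finset.exists_subset_card_eq hq).choose else ∅

lemma Tset_subset (q : (Fin L → Fin m) × (Fin L → Fin m)) : Tset q ⊆ repSet q := by
  unfold Tset
  split
  · exact (Finset.exists_subset_card_eq ‹_›).choose_spec.1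
  · exact empty_subset _

lemma Tset_card (q : (Fin L → Fin m) × (Fin L → Fin m)) (hq : L ≤ (repSet q).card) :
    (Tset q).card = L := by
  unfold Tset
  rw [dif_pos hq]
  exact (Finset.exists_subset_card_eq hq).choose_spec.2

/-- Candidate earlier witnesses for a repeat position. -/
def witSet (q : (Fin L → Fin m) × (Fin L → Fin m)) (p : Fin L × Bool) : Finset (Fin L) :=
  univ.filter (fun j => j < p.1 ∧ hfun q (j, p.2) = hfun q p)

lemma witSet_nonempty (q : (Fin L → Fin m) × (Fin L → Fin m)) {p : Fin L × Bool}
    (hp : p ∈ repSet q) : (witSet q p).Nonempty := by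
  simp only [repSet, mem_filter, mem_univ, true_and] at hp
  obtain ⟨j, hj1, hj2⟩ := hp
  exact ⟨j, by simp [witSet, hj1, hj2]⟩

/-- The encoding: a repeat position records its least earlier witness (as `Sum.inl`),
a non-repeat position records its value (as `Sum.inr`). -/
noncomputable def Ffun (q : (Fin L → Fin m) × (Fin L → Fin m)) (p : Fin L × Bool) :
    Fin L ⊕ Fin m :=
  if hp : p ∈ Tset q then
    Sum.inl ((witSet q p).min' (witSet_nonempty q (Tset_subset q hp)))
  else Sum.inr (hfun q p)

lemma hfun_eq_of_encode_eq (q q' : (Fin L → Fin m) × (Fin L → Fin m))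
    (hT : Tset q = Tset q') (hF : Ffun q = Ffun q') : hfun q = hfun q' := by
  have key : ∀ n : ℕ, ∀ p : Fin L × Bool, p.1.1 < n → hfun q p = hfun q' p := by
    intro n
    induction n using Nat.strong_induction_on with
    | _ n ih =>
      intro p hpn
      by_cases hp : p ∈ Tset q
      · have hp' : p ∈ Tset q' := hT ▸ hp
        have h1 := congrFun hF p
        rw [Ffun, Ffun, dif_pos hp, dif_pos hp'] at h1
        have hmem : (witSet q p).min' (witSet_nonempty q (Tset_subset q hp)) ∈ witSet q p :=
          Finset.min'_mem _ _
        have hmem' : (witSet q' p).min' (witSet_nonempty q' (Tset_subset q' hp')) ∈ witSet q' p :=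
          Finset.min'_mem _ _
        set j := (witSet q p).min' (witSet_nonempty q (Tset_subset q hp)) with hjdef
        set j' := (witSet q' p).min' (witSet_nonempty q' (Tset_subset q' hp')) with hj'def
        have hjj : j = j' := by simpa using h1
        simp only [witSet, mem_filter, mem_univ, true_and] at hmem hmem'
        have hlt : (j : ℕ) < p.1.1 := hmem.1
        calc hfun q p = hfun q (j, p.2) := hmem.2.symm
          _ = hfun q' (j, p.2) := ih (j.1 + 1) (by omega) (j, p.2) (Nat.lt_succ_self _)
          _ = hfun q' (j', p.2) := by rw [hjj]
          _ = hfun q' p := hmem'.2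
      · have hp' : p ∉ Tset q' := hT ▸ hp
        have h1 := congrFun hF p
        rw [Ffun, Ffun, dif_neg hp, dif_neg hp'] at h1
        simpa using h1
  funext p
  exact key (p.1.1 + 1) p (Nat.lt_succ_self _)

lemma le_repSet_card (q : (Fin L → Fin m) × (Fin L → Fin m))
    (hq : (image q.1 univ).card + (image q.2 univ).card < L) :
    L ≤ (repSet q).card := by
  classical
  -- the non-repeat positions inject into the union of the two images (tagged by layer)
  set target : Finset (Fin m × Bool) :=
    (image q.1 univ) ×ˢ {false} ∪ (image q.2 univ) ×ˢ {true} with htarget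
  have hmaps : ∀ p ∈ (repSet q)ᶜ, (hfun q p, p.2) ∈ target := by
    intro p _
    rcases p with ⟨i, b⟩
    cases b
    · exact mem_union_left _ (by simp [hfun, mem_product])
    · exact mem_union_right _ (by simp [hfun, mem_product])
  have hinj : Set.InjOn (fun p => (hfun q p, p.2)) ((repSet q)ᶜ : Finset (Fin L × Bool)) := by
    rintro ⟨i, b⟩ hp ⟨i', b'⟩ hp' heq
    simp only [Finset.mem_coe, Finset.mem_compl] at hp hp'
    simp only [Prod.mk.injEq] at heq
    obtain ⟨hv, hb⟩ := heq
    subst hb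
    rcases lt_trichotomy i i' with h | h | h
    · exfalso
      apply hp'
      simp only [repSet, mem_filter, mem_univ, true_and]
      exact ⟨i, h, hv⟩
    · rw [h]
    · exfalso
      apply hp
      simp only [repSet, mem_filter, mem_univ, true_and]
      exact ⟨i', h, hv.symm⟩
  have hcard1 : ((repSet q)ᶜ : Finset (Fin L × Bool)).card ≤ target.card :=
    Finset.card_le_card_of_injOn _ hmaps hinj
  have hcard2 : target.card ≤ (image q.1 univ).card + (image q.2 univ).card := by
    refine (Finset.card_union_le _ _).trans ?_
    simp [Finset.card_product]
  have hcompl : (repSet q)ᶜ.card = Fintype.card (Fin L × Bool) - (repSet q).card :=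
    Finset.card_compl _
  have htot : (repSet q).card ≤ Fintype.card (Fin L × Bool) := Finset.card_le_univ _
  have hcards : Fintype.card (Fin L × Bool) = L * 2 := by simp
  omega

end NeighborhoodAux

open NeighborhoodAux in
/-- Fix a set of `L` objects, each hashed by two independent uniformly random hash
functions into `m` cache nodes per layer (the two layers are disjoint, so
`|Γ(S)| = |im h₀| + |im h₁|`). The probability that `|Γ(S)| < L` is at most
`(2eL/m)^L`. Probability is modeled as a uniform count over all pairs of hash
functions. -/
theorem neighborhood_small_prob_le (m L : ℕ) (hm : 0 < m) :
    ((univ.filter (fun q : (Fin L → Fin m) × (Fin L → Fin m) =>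
        (image q.1 univ).card + (image q.2 univ).card < L)).card : ℝ)
      / ((m : ℝ) ^ (2 * L)) ≤
      (2 * Real.exp 1 * L / m) ^ L := by
  classical
  set bad := univ.filter (fun q : (Fin L → Fin m) × (Fin L → Fin m) =>
      (image q.1 univ).card + (image q.2 univ).card < L) with hbad
  set codom := (univ.powersetCard L : Finset (Finset (Fin L × Bool))).sigma
      (fun T => Fintype.piFinset (fun p => if p ∈ T then
        (univ.image (Sum.inl : Fin L → Fin L ⊕ Fin m)) else
        (univ.image (Sum.inr : Fin m → Fin L ⊕ Fin m)))) with hcodom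
  -- Step 1: injection from bad pairs into codom
  have hinj : bad.card ≤ codom.card := by
    apply Finset.card_le_card_of_injOn (fun q => (⟨Tset q, Ffun q⟩ : Σ _ : Finset (Fin L × Bool), Fin L × Bool → Fin L ⊕ Fin m))
    · intro q hq
      simp only [hbad, Finset.mem_coe, mem_filter, mem_univ, true_and] at hq
      have hrep := le_repSet_card q hq
      refine Finset.mem_sigma.2 ⟨Finset.mem_powersetCard.2 ⟨subset_univ _, Tset_card q hrep⟩, ?_⟩
      rw [Fintype.mem_piFinset]
      intro p
      by_cases hp : p ∈ Tset q
      · rw [if_pos hp]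
        show Ffun q p ∈ _
        simp [Ffun, hp]
      · rw [if_neg hp]
        show Ffun q p ∈ _
        simp [Ffun, hp]
    · intro q hq q' hq' heq
      injection heq with hT hF'
      have hF : Ffun q = Ffun q' := hF'
      have hh := hfun_eq_of_encode_eq q q' hT hF
      refine Prod.ext (funext fun i => ?_) (funext fun i => ?_)
      · have := congrFun hh (i, false); simpa [hfun] using this
      · have := congrFun hh (i, true); simpa [hfun] using this
  -- Step 2: count codom
  have hcount : codom.card = (L * 2).choose L * (L ^ L * m ^ L) := by
    rw [hcodom, Finset.card_sigma]
    have hconst : ∀ T ∈ (univ.powersetCard L : Finset (Finset (Fin L × Bool))),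
        (Fintype.piFinset (fun p => if p ∈ T then
          (univ.image (Sum.inl : Fin L → Fin L ⊕ Fin m)) else
          (univ.image (Sum.inr : Fin m → Fin L ⊕ Fin m)))).card = L ^ L * m ^ L := by
      intro T hT
      obtain ⟨-, hTc⟩ := Finset.mem_powersetCard.1 hT
      rw [Fintype.card_piFinset]
      have hstep : ∀ p : Fin L × Bool,
          (if p ∈ T then (univ.image (Sum.inl : Fin L → Fin L ⊕ Fin m)) else
            (univ.image (Sum.inr : Fin m → Fin L ⊕ Fin m))).card
          = if p ∈ T then L else m := by
        intro p
        split
        · rw [Finset.card_image_of_injective _ Sum.inl_injective, card_univ, Fintype.card_fin]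
        · rw [Finset.card_image_of_injective _ Sum.inr_injective, card_univ, Fintype.card_fin]
      rw [Finset.prod_congr rfl (fun p _ => hstep p)]
      rw [← Finset.prod_mul_prod_compl T]
      have h1 : ∏ p ∈ T, (if p ∈ T then L else m) = L ^ L := by
        rw [Finset.prod_congr rfl (fun p hp => if_pos hp), Finset.prod_const, hTc]
      have h2 : ∏ p ∈ Tᶜ, (if p ∈ T then L else m) = m ^ L := by
        rw [Finset.prod_congr rfl (fun p hp => if_neg (Finset.mem_compl.1 hp)),
          Finset.prod_const, Finset.card_compl, hTc]
        congr 1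
        simp
        omega
      rw [h1, h2]
    rw [Finset.sum_congr rfl hconst, Finset.sum_const, Finset.card_powersetCard, card_univ]
    simp [Nat.smul_one_eq_cast]
  -- Step 3: binomial bound
  have hchoose : (L * 2).choose L ≤ 4 ^ L := by
    calc (L * 2).choose L ≤ (2 * L + 1).choose L := by
          rw [Nat.mul_comm]; exact Nat.choose_le_succ (2 * L) L
      _ ≤ 4 ^ L := Nat.choose_middle_le_pow L
  have hnat : bad.card ≤ 4 ^ L * (L ^ L * m ^ L) := by
    calc bad.card ≤ codom.card := hinj
      _ = (L * 2).choose L * (L ^ L * m ^ L) := hcount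
      _ ≤ 4 ^ L * (L ^ L * m ^ L) := Nat.mul_le_mul_right _ hchoose
  -- Step 4: real arithmetic
  have hm0 : (0 : ℝ) < (m : ℝ) := by exact_mod_cast hm
  have hmpow : (0 : ℝ) < (m : ℝ) ^ (2 * L) := by positivity
  rw [div_le_iff₀ hmpow]
  have hR : (bad.card : ℝ) ≤ (4 : ℝ) ^ L * ((L : ℝ) ^ L * (m : ℝ) ^ L) := by
    exact_mod_cast hnat
  refine hR.trans ?_
  have he : (2 : ℝ) ≤ Real.exp 1 := by
    have := Real.add_one_le_exp (1 : ℝ)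
    linarith
  have hrhs : (2 * Real.exp 1 * (L : ℝ) / m) ^ L * (m : ℝ) ^ (2 * L)
      = (2 * Real.exp 1 * (L : ℝ)) ^ L * (m : ℝ) ^ L := by
    rw [div_pow, show ((m : ℝ)) ^ (2 * L) = (m : ℝ) ^ L * (m : ℝ) ^ L by
      rw [two_mul, pow_add]]
    field_simp
  rw [hrhs]
  have h4 : (4 : ℝ) ^ L * (L : ℝ) ^ L = (4 * (L : ℝ)) ^ L := (mul_pow _ _ _).symm
  rw [← mul_assoc, h4]
  have hle : (4 * (L : ℝ)) ^ L ≤ (2 * Real.exp 1 * (L : ℝ)) ^ L := by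
    apply pow_le_pow_left₀ (by positivity)
    nlinarith [Nat.cast_nonneg (α := ℝ) L]
  exact mul_le_mul_of_nonneg_right hle (by positivity)
end

section
/- Let k = αm objects be hashed into 2m cache nodes (m per layer) by two independent uniform hash functions. If α is a sufficiently small positive constant, then the probability that some subset S ⊆ U of size at least m^{0.1} satisfies |Γ(S)| < |S| is at most 1/m^{10} for all sufficiently large m. -/
open Finset
open scoped Classical Nat

lemma count_restricted (k m : ℕ) (S : Finset (Fin k)) (T : Finset (Fin m)) :
    (univ.filter (fun f : Fin k → Fin m => ∀ x ∈ S, f x ∈ T)).card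
      = T.card ^ S.card * m ^ (k - S.card) := by
  have h : (univ.filter (fun f : Fin k → Fin m => ∀ x ∈ S, f x ∈ T))
      = Fintype.piFinset (fun x => if x ∈ S then T else univ) := by
    ext f
    simp only [mem_filter, mem_univ, true_and, Fintype.mem_piFinset]
    constructor
    · intro h x
      split
      · exact h x ‹_›
      · exact mem_univ _
    · intro h x hx
      have := h x
      rwa [if_pos hx] at this
  rw [h, Fintype.card_piFinset]
  have h2 : ∀ x : Fin k, (if x ∈ S then T else univ).card = if x ∈ S then T.card else m := by
    intro x; split <;> simp
  simp_rw [h2]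
  rw [Finset.prod_ite, Finset.prod_const, Finset.prod_const]
  congr 1
  · congr 1
    simp [Finset.filter_mem_eq_inter]
  · congr 1
    have : Finset.filter (fun x => ¬ x ∈ S) univ = Sᶜ := by
      ext x; simp
    rw [this, Finset.card_compl]
    simp

lemma count_pair (k m : ℕ) (S : Finset (Fin k)) (T1 T2 : Finset (Fin m)) :
    (univ.filter (fun q : (Fin k → Fin m) × (Fin k → Fin m) =>
        (∀ x ∈ S, q.1 x ∈ T1) ∧ ∀ x ∈ S, q.2 x ∈ T2)).card
      = (univ.filter (fun f : Fin k → Fin m => ∀ x ∈ S, f x ∈ T1)).card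
        * (univ.filter (fun f : Fin k → Fin m => ∀ x ∈ S, f x ∈ T2)).card := by
  rw [← Finset.card_product]
  congr 1
  ext q
  simp [Finset.mem_product]

lemma badS_subset (k m : ℕ) (hkm : k ≤ m) (S : Finset (Fin k)) :
    (univ.filter (fun q : (Fin k → Fin m) × (Fin k → Fin m) =>
        (S.image q.1).card + (S.image q.2).card < S.card))
      ⊆ ((univ : Finset (Finset (Fin m) × Finset (Fin m))).filter
          (fun p => p.1.card + p.2.card + 1 = S.card)).biUnion
          (fun p => univ.filter (fun q => (∀ x ∈ S, q.1 x ∈ p.1) ∧ ∀ x ∈ S, q.2 x ∈ p.2)) := by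
  intro q hq
  simp only [mem_filter, mem_univ, true_and] at hq
  have hScard : S.card ≤ k := by
    simpa using Finset.card_le_card (Finset.subset_univ S)
  obtain ⟨T1, hsub1, -, hcard1⟩ :=
    Finset.exists_subsuperset_card_eq (Finset.subset_univ (S.image q.1))
      (show (S.image q.1).card ≤ S.card - 1 - (S.image q.2).card by omega)
      (show S.card - 1 - (S.image q.2).card ≤ (univ : Finset (Fin m)).card by
        simp only [Finset.card_univ, Fintype.card_fin]; omega)
  rw [Finset.mem_biUnion]
  refine ⟨(T1, S.image q.2), ?_, ?_⟩
  · simp only [mem_filter, mem_univ, true_and, hcard1]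
    omega
  · simp only [mem_filter, mem_univ, true_and]
    exact ⟨fun x hx => hsub1 (Finset.mem_image_of_mem _ hx),
      fun x hx => Finset.mem_image_of_mem _ hx⟩

lemma pairs_card_le (m L : ℕ) :
    (((univ : Finset (Finset (Fin m) × Finset (Fin m))).filter
        (fun p => p.1.card + p.2.card + 1 = L)).card) ≤ (2 * m).choose (L - 1) := by
  have h := Finset.card_le_card_of_injOn
    (f := fun p : Finset (Fin m) × Finset (Fin m) =>
      p.1.map ⟨Sum.inl, Sum.inl_injective⟩ ∪ p.2.map ⟨Sum.inr, Sum.inr_injective⟩)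
    (s := (univ : Finset (Finset (Fin m) × Finset (Fin m))).filter
        (fun p => p.1.card + p.2.card + 1 = L))
    (t := Finset.powersetCard (L - 1) (univ : Finset (Fin m ⊕ Fin m)))
    ?_ ?_
  · refine h.trans ?_
    rw [Finset.card_powersetCard]
    simp [Finset.card_univ, two_mul]
  · intro p hp
    simp only [Finset.mem_coe, mem_filter, mem_univ, true_and] at hp ⊢
    rw [Finset.mem_powersetCard]
    constructor
    · exact Finset.subset_univ _
    · rw [Finset.card_union_of_disjoint, Finset.card_map, Finset.card_map]
      · omega
      · rw [Finset.disjoint_left]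
        rintro a ha hb
        rw [Finset.mem_map] at ha hb
        obtain ⟨x, -, hx⟩ := ha
        obtain ⟨y, -, hy⟩ := hb
        rw [← hx] at hy
        simp at hy
  · intro p hp p' hp' heq
    simp only at heq
    have h1 : p.1 = p'.1 := by
      ext a
      have : (Sum.inl a : Fin m ⊕ Fin m) ∈ p.1.map ⟨Sum.inl, Sum.inl_injective⟩ ∪ p.2.map ⟨Sum.inr, Sum.inr_injective⟩
          ↔ (Sum.inl a : Fin m ⊕ Fin m) ∈ p'.1.map ⟨Sum.inl, Sum.inl_injective⟩ ∪ p'.2.map ⟨Sum.inr, Sum.inr_injective⟩ := by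
        rw [heq]
      simpa using this
    have h2 : p.2 = p'.2 := by
      ext a
      have : (Sum.inr a : Fin m ⊕ Fin m) ∈ p.1.map ⟨Sum.inl, Sum.inl_injective⟩ ∪ p.2.map ⟨Sum.inr, Sum.inr_injective⟩
          ↔ (Sum.inr a : Fin m ⊕ Fin m) ∈ p'.1.map ⟨Sum.inl, Sum.inl_injective⟩ ∪ p'.2.map ⟨Sum.inr, Sum.inr_injective⟩ := by
        rw [heq]
      simpa using this
    exact Prod.ext h1 h2

lemma badS_card_le (k m : ℕ) (hkm : k ≤ m) (S : Finset (Fin k)) :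
    (univ.filter (fun q : (Fin k → Fin m) × (Fin k → Fin m) =>
        (S.image q.1).card + (S.image q.2).card < S.card)).card
      ≤ (2 * m).choose (S.card - 1) * (S.card ^ S.card * m ^ (k - S.card))^2 := by
  refine (Finset.card_le_card (badS_subset k m hkm S)).trans ?_
  refine (Finset.card_biUnion_le).trans ?_
  refine (Finset.sum_le_card_nsmul _ _ ((S.card ^ S.card * m ^ (k - S.card))^2) ?_).trans ?_
  · intro p hp
    simp only [mem_filter, mem_univ, true_and] at hp
    rw [count_pair, count_restricted, count_restricted]
    have h1 : p.1.card ≤ S.card := by omega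
    have h2 : p.2.card ≤ S.card := by omega
    rw [pow_two]
    exact Nat.mul_le_mul
      (Nat.mul_le_mul_right _ (Nat.pow_le_pow_left h1 _))
      (Nat.mul_le_mul_right _ (Nat.pow_le_pow_left h2 _))
  · rw [smul_eq_mul]
    exact Nat.mul_le_mul_right _ (pairs_card_le m S.card)

lemma core_ineq (m k j : ℕ) (hjk : j ≤ k) (hj1 : 1 ≤ j) (hkm : k ≤ m) :
    (k.choose j : ℝ) * ((2*m).choose (j-1) : ℝ) * ((j:ℝ)^j)^2
      ≤ (k:ℝ)^j * (2*(m:ℝ))^j * (Real.exp 1 ^ 2)^j := by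
  have hC1 : (k.choose j : ℝ) ≤ (k:ℝ)^j / (j ! : ℝ) := by
    have := Nat.choose_le_pow_div (α := ℝ) j k
    push_cast at this ⊢
    exact this
  have hC2 : ((2*m).choose (j-1) : ℝ) ≤ (2*(m:ℝ))^(j-1) / ((j-1)! : ℝ) := by
    have := Nat.choose_le_pow_div (α := ℝ) (j-1) (2*m)
    push_cast at this ⊢
    exact this
  have hfac : ((j:ℕ)! : ℝ) = (j:ℝ) * ((j-1)! : ℝ) := by
    rw [← Nat.mul_factorial_pred (by omega : j ≠ 0)]
    push_cast
    ring
  have hjj : (j:ℝ)^j ≤ Real.exp 1 ^ j * (j ! : ℝ) := by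
    have h := Real.pow_div_factorial_le_exp (x := (j:ℝ)) (Nat.cast_nonneg j) j
    have hfpos : (0:ℝ) < (j ! : ℝ) := by positivity
    rw [div_le_iff₀ hfpos] at h
    calc (j:ℝ)^j ≤ Real.exp (j:ℝ) * (j ! : ℝ) := h
      _ = Real.exp 1 ^ j * (j ! : ℝ) := by rw [← Real.exp_one_pow]
  have hsq : ((j:ℝ)^j)^2 ≤ (Real.exp 1 ^ 2)^j * (j ! : ℝ) * (j ! : ℝ) := by
    have h := mul_le_mul hjj hjj (by positivity) (by positivity)
    calc ((j:ℝ)^j)^2 = (j:ℝ)^j * (j:ℝ)^j := by ring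
      _ ≤ (Real.exp 1 ^ j * (j ! : ℝ)) * (Real.exp 1 ^ j * (j ! : ℝ)) := h
      _ = (Real.exp 1 ^ 2)^j * (j ! : ℝ) * (j ! : ℝ) := by
          rw [← pow_mul]
          ring
  have hfpos : (0:ℝ) < ((j-1)! : ℝ) := by positivity
  have hjpos : (0:ℝ) < (j:ℝ) := by
    have : 0 < j := hj1
    exact_mod_cast this
  calc (k.choose j : ℝ) * ((2*m).choose (j-1) : ℝ) * ((j:ℝ)^j)^2
      ≤ ((k:ℝ)^j / (j ! : ℝ)) * ((2*(m:ℝ))^(j-1) / ((j-1)! : ℝ)) * ((Real.exp 1 ^ 2)^j * (j ! : ℝ) * (j ! : ℝ)) := by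
        have h1 : (0:ℝ) ≤ (k.choose j : ℝ) := Nat.cast_nonneg _
        have h2 : (0:ℝ) ≤ ((2*m).choose (j-1) : ℝ) := Nat.cast_nonneg _
        gcongr
    _ = (k:ℝ)^j * (2*(m:ℝ))^(j-1) * (Real.exp 1 ^ 2)^j * (j:ℝ) := by
        rw [hfac]
        field_simp
    _ ≤ (k:ℝ)^j * (2*(m:ℝ))^(j-1) * (Real.exp 1 ^ 2)^j * (2*(m:ℝ)) := by
        gcongr
        have : (j:ℝ) ≤ (m:ℝ) := by exact_mod_cast hjk.trans hkm
        linarith [Nat.cast_nonneg (α := ℝ) m]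
    _ = (k:ℝ)^j * ((2*(m:ℝ))^(j-1) * (2*(m:ℝ))) * (Real.exp 1 ^ 2)^j := by ring
    _ = (k:ℝ)^j * (2*(m:ℝ))^j * (Real.exp 1 ^ 2)^j := by
        have hj' : j - 1 + 1 = j := by omega
        rw [← pow_succ, hj']

lemma per_j (m k j : ℕ) (α : ℝ) (hk : (k:ℝ) = α * m) (hjk : j ≤ k) (hj1 : 1 ≤ j) (hkm : k ≤ m) :
    (k.choose j : ℝ) * ((2*m).choose (j-1) : ℝ) * (((j:ℝ)^j * (m:ℝ)^(k-j))^2)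
      ≤ (2 * Real.exp 1 ^ 2 * α)^j * (m:ℝ)^(2*k) := by
  have core := core_ineq m k j hjk hj1 hkm
  have hsplit : (m:ℝ)^(2*k) = ((m:ℝ)^(k-j))^2 * ((m:ℝ)^j)^2 := by
    rw [← pow_mul, ← pow_mul, ← pow_add]
    congr 1
    omega
  have hbase : (k:ℝ)^j * (2*(m:ℝ))^j * (Real.exp 1 ^ 2)^j
      = (2 * Real.exp 1 ^ 2 * α)^j * ((m:ℝ)^j)^2 := by
    rw [← mul_pow, ← mul_pow, ← pow_mul, mul_comm j 2, pow_mul, ← mul_pow]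
    congr 1
    rw [hk]
    ring
  calc (k.choose j : ℝ) * ((2*m).choose (j-1) : ℝ) * (((j:ℝ)^j * (m:ℝ)^(k-j))^2)
      = (k.choose j : ℝ) * ((2*m).choose (j-1) : ℝ) * ((j:ℝ)^j)^2 * ((m:ℝ)^(k-j))^2 := by
        ring
    _ ≤ (k:ℝ)^j * (2*(m:ℝ))^j * (Real.exp 1 ^ 2)^j * ((m:ℝ)^(k-j))^2 := by
        gcongr
    _ = (2 * Real.exp 1 ^ 2 * α)^j * (m:ℝ)^(2*k) := by
        rw [hbase, hsplit]
        ring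

lemma tail_small (m : ℕ) (hm1 : 1 ≤ m)
    (hm : (2 * ((120 : ℕ)! : ℝ) / (Real.log 2)^120) ≤ (m:ℝ)) :
    (2*(m:ℝ)) * ((1/2:ℝ) ^ ((m:ℝ)^(0.1:ℝ))) ≤ 1 / (m:ℝ)^10 := by
  have hmpos : (0:ℝ) < (m:ℝ) := by exact_mod_cast hm1
  have hy : (0:ℝ) ≤ (m:ℝ)^(0.1:ℝ) := Real.rpow_nonneg hmpos.le _
  have hlog : (0:ℝ) < Real.log 2 := Real.log_pos (by norm_num)
  have h2y : (0:ℝ) < (2:ℝ) ^ ((m:ℝ)^(0.1:ℝ)) := Real.rpow_pos_of_pos (by norm_num) _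
  have hhalf : (1/2:ℝ) ^ ((m:ℝ)^(0.1:ℝ)) = 1 / (2:ℝ) ^ ((m:ℝ)^(0.1:ℝ)) := by
    rw [one_div, one_div, ← Real.inv_rpow (by norm_num : (0:ℝ) ≤ 2)]
  rw [hhalf]
  rw [mul_one_div, div_le_div_iff₀ h2y (by positivity)]
  rw [one_mul]
  have hexp : ((Real.log 2) * ((m:ℝ)^(0.1:ℝ)))^120 / ((120:ℕ)! : ℝ)
      ≤ (2:ℝ) ^ ((m:ℝ)^(0.1:ℝ)) := by
    rw [Real.rpow_def_of_pos (by norm_num : (0:ℝ) < 2)]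
    exact Real.pow_div_factorial_le_exp (x := Real.log 2 * ((m:ℝ)^(0.1:ℝ))) (by positivity) 120
  refine le_trans ?_ hexp
  have hy120 : ((m:ℝ)^(0.1:ℝ))^(120:ℕ) = (m:ℝ)^(12:ℕ) := by
    rw [← Real.rpow_natCast ((m:ℝ)^(0.1:ℝ)) 120, ← Real.rpow_mul hmpos.le,
      show (0.1:ℝ) * ((120:ℕ):ℝ) = ((12:ℕ):ℝ) by norm_num, Real.rpow_natCast]
  rw [mul_pow, hy120]
  have hfpos : (0:ℝ) < ((120:ℕ)! : ℝ) := by positivity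
  have h1 : (2:ℝ) ≤ Real.log 2 ^ 120 * (m:ℝ) / ((120:ℕ)! : ℝ) := by
    rw [le_div_iff₀ hfpos]
    rw [div_le_iff₀ (by positivity : (0:ℝ) < Real.log 2 ^ 120)] at hm
    nlinarith
  calc 2 * (m:ℝ) * (m:ℝ)^10 = 2 * (m:ℝ)^11 := by ring
    _ ≤ (Real.log 2 ^ 120 * (m:ℝ) / ((120:ℕ)! : ℝ)) * (m:ℝ)^11 := by
        exact mul_le_mul_of_nonneg_right h1 (by positivity)
    _ = Real.log 2 ^ 120 * (m:ℝ)^12 / ((120:ℕ)! : ℝ) := by ring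

/-- Let `k = αm` objects be hashed into two layers of `m` cache nodes each by two
independent uniform hash functions. For a sufficiently small positive constant `α` and
all sufficiently large `m`, the probability that some subset `S` of objects of size at
least `m^0.1` satisfies `|Γ(S)| < |S|` is at most `1 / m^10`. -/
theorem large_sets_expansion_fails_rarely :
    ∃ α₀ : ℝ, 0 < α₀ ∧ ∀ α : ℝ, 0 < α → α ≤ α₀ →
      ∃ M : ℕ, ∀ m : ℕ, M ≤ m → ∀ k : ℕ, (k : ℝ) = α * m →
        ((univ.filter (fun q : (Fin k → Fin m) × (Fin k → Fin m) =>
            ∃ S : Finset (Fin k), (m : ℝ) ^ (0.1 : ℝ) ≤ (S.card : ℝ) ∧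
              (S.image q.1).card + (S.image q.2).card < S.card)).card : ℝ)
          / ((m : ℝ) ^ (2 * k)) ≤ 1 / (m : ℝ) ^ 10 := by
  refine ⟨1 / (4 * Real.exp 1 ^ 2), by positivity, ?_⟩
  intro α hα hα0
  refine ⟨⌈(2 * ((120:ℕ)! : ℝ) / (Real.log 2)^120)⌉₊ + 1, ?_⟩
  intro m hM k hk
  -- basic facts
  have hm1 : 1 ≤ m := le_trans (Nat.le_add_left 1 _) hM
  have hmpos : (0:ℝ) < (m:ℝ) := by exact_mod_cast hm1
  have he1 : (1:ℝ) ≤ Real.exp 1 := by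
    have := Real.add_one_le_exp (1:ℝ)
    linarith
  have hα1 : α ≤ 1 := by
    refine hα0.trans ?_
    rw [div_le_one (by positivity)]
    nlinarith
  have hhalf : 2 * Real.exp 1 ^ 2 * α ≤ 1/2 := by
    have h1 : 2 * Real.exp 1 ^ 2 * α ≤ 2 * Real.exp 1 ^ 2 * (1 / (4 * Real.exp 1 ^ 2)) := by
      have : (0:ℝ) ≤ 2 * Real.exp 1 ^ 2 := by positivity
      exact mul_le_mul_of_nonneg_left hα0 this
    refine h1.trans ?_
    rw [mul_one_div, div_le_div_iff₀ (by positivity) (by norm_num)]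
    ring_nf
    nlinarith [Real.exp_pos 1]
  have h2eα : (0:ℝ) ≤ 2 * Real.exp 1 ^ 2 * α := by positivity
  have hkm : k ≤ m := by
    have : (k:ℝ) ≤ (m:ℝ) := by
      rw [hk]
      nlinarith
    exact_mod_cast this
  have hMr : (2 * ((120:ℕ)! : ℝ) / (Real.log 2)^120) ≤ (m:ℝ) := by
    refine le_trans (Nat.le_ceil _) ?_
    have : (⌈(2 * ((120:ℕ)! : ℝ) / (Real.log 2)^120)⌉₊ : ℕ) ≤ m := by omega
    exact_mod_cast this
  have hone : (1:ℝ) ≤ (m:ℝ)^(0.1:ℝ) := by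
    calc (1:ℝ) = (1:ℝ)^(0.1:ℝ) := (Real.one_rpow _).symm
      _ ≤ (m:ℝ)^(0.1:ℝ) :=
        Real.rpow_le_rpow zero_le_one (by exact_mod_cast hm1) (by norm_num)
  have hpow2k : (0:ℝ) < (m:ℝ)^(2*k) := by positivity
  -- step 1 : union bound over S
  have step1 : (univ.filter (fun q : (Fin k → Fin m) × (Fin k → Fin m) =>
        ∃ S : Finset (Fin k), (m : ℝ) ^ (0.1 : ℝ) ≤ (S.card : ℝ) ∧
          (S.image q.1).card + (S.image q.2).card < S.card)).card
      ≤ ∑ S : Finset (Fin k), (univ.filter (fun q : (Fin k → Fin m) × (Fin k → Fin m) =>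
          (m : ℝ) ^ (0.1 : ℝ) ≤ (S.card : ℝ) ∧
          (S.image q.1).card + (S.image q.2).card < S.card)).card := by
    refine le_trans (Finset.card_le_card ?_) Finset.card_biUnion_le
    intro q hq
    simp only [mem_filter, mem_univ, true_and] at hq
    obtain ⟨S, h1, h2⟩ := hq
    exact Finset.mem_biUnion.2 ⟨S, mem_univ _, by simp [h1, h2]⟩
  -- the per-cardinality bound function
  set G : ℕ → ℝ := fun j => if (m:ℝ)^(0.1:ℝ) ≤ (j:ℝ) then
      ((2*m).choose (j-1) : ℝ) * (((j:ℝ))^j * (m:ℝ)^(k - j))^2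
    else 0 with hG
  -- step 2 : per-S bound
  have step2 : ∀ S : Finset (Fin k),
      ((univ.filter (fun q : (Fin k → Fin m) × (Fin k → Fin m) =>
          (m : ℝ) ^ (0.1 : ℝ) ≤ (S.card : ℝ) ∧
          (S.image q.1).card + (S.image q.2).card < S.card)).card : ℝ)
      ≤ G S.card := by
    intro S
    simp only [hG]
    by_cases hc : (m:ℝ)^(0.1:ℝ) ≤ (S.card:ℝ)
    · rw [if_pos hc]
      have hsub : (univ.filter (fun q : (Fin k → Fin m) × (Fin k → Fin m) =>
            (m : ℝ) ^ (0.1 : ℝ) ≤ (S.card : ℝ) ∧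
            (S.image q.1).card + (S.image q.2).card < S.card))
          ⊆ (univ.filter (fun q : (Fin k → Fin m) × (Fin k → Fin m) =>
            (S.image q.1).card + (S.image q.2).card < S.card)) := by
        intro q hq
        simp only [mem_filter, mem_univ, true_and] at hq ⊢
        exact hq.2
      have hb := (Finset.card_le_card hsub).trans (badS_card_le k m hkm S)
      calc ((univ.filter (fun q : (Fin k → Fin m) × (Fin k → Fin m) =>
            (m : ℝ) ^ (0.1 : ℝ) ≤ (S.card : ℝ) ∧
            (S.image q.1).card + (S.image q.2).card < S.card)).card : ℝ)
          ≤ (((2 * m).choose (S.card - 1) * (S.card ^ S.card * m ^ (k - S.card))^2 : ℕ) : ℝ) := by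
            exact_mod_cast hb
        _ = ((2*m).choose (S.card-1) : ℝ) * (((S.card:ℝ))^S.card * (m:ℝ)^(k - S.card))^2 := by
            push_cast
            ring
    · rw [if_neg hc]
      have : (univ.filter (fun q : (Fin k → Fin m) × (Fin k → Fin m) =>
            (m : ℝ) ^ (0.1 : ℝ) ≤ (S.card : ℝ) ∧
            (S.image q.1).card + (S.image q.2).card < S.card)) = ∅ :=
        Finset.filter_false_of_mem (fun q _ h => hc h.1)
      rw [this]
      simp
  -- combine steps 1 and 2
  have step12 : ((univ.filter (fun q : (Fin k → Fin m) × (Fin k → Fin m) =>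
        ∃ S : Finset (Fin k), (m : ℝ) ^ (0.1 : ℝ) ≤ (S.card : ℝ) ∧
          (S.image q.1).card + (S.image q.2).card < S.card)).card : ℝ)
      ≤ ∑ S : Finset (Fin k), G S.card := by
    calc ((univ.filter (fun q : (Fin k → Fin m) × (Fin k → Fin m) =>
          ∃ S : Finset (Fin k), (m : ℝ) ^ (0.1 : ℝ) ≤ (S.card : ℝ) ∧
            (S.image q.1).card + (S.image q.2).card < S.card)).card : ℝ)
        ≤ ((∑ S : Finset (Fin k), (univ.filter (fun q : (Fin k → Fin m) × (Fin k → Fin m) =>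
            (m : ℝ) ^ (0.1 : ℝ) ≤ (S.card : ℝ) ∧
            (S.image q.1).card + (S.image q.2).card < S.card)).card : ℕ) : ℝ) := by
          exact_mod_cast step1
      _ = ∑ S : Finset (Fin k), ((univ.filter (fun q : (Fin k → Fin m) × (Fin k → Fin m) =>
            (m : ℝ) ^ (0.1 : ℝ) ≤ (S.card : ℝ) ∧
            (S.image q.1).card + (S.image q.2).card < S.card)).card : ℝ) := by
          push_cast
          rfl
      _ ≤ ∑ S : Finset (Fin k), G S.card := Finset.sum_le_sum (fun S _ => step2 S)
  -- group by cardinality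
  have hgroup : ∑ S : Finset (Fin k), G S.card
      = ∑ j ∈ Finset.range (k+1), (k.choose j : ℝ) * G j := by
    calc ∑ S : Finset (Fin k), G S.card
        = ∑ S ∈ Finset.powerset (univ : Finset (Fin k)), G S.card := by
          rw [Finset.powerset_univ]
      _ = ∑ j ∈ Finset.range ((univ : Finset (Fin k)).card + 1),
            ∑ S ∈ Finset.powersetCard j (univ : Finset (Fin k)), G S.card := by
          rw [Finset.powerset_card_disjiUnion]
          exact Finset.sum_disjiUnion ..
      _ = ∑ j ∈ Finset.range (k+1), (k.choose j : ℝ) * G j := by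
          rw [Finset.card_univ, Fintype.card_fin]
          refine Finset.sum_congr rfl ?_
          intro j hj
          rw [Finset.sum_congr rfl
              (fun S hS => by rw [(Finset.mem_powersetCard.1 hS).2]),
            Finset.sum_const, Finset.card_powersetCard, Finset.card_univ,
            Fintype.card_fin, nsmul_eq_mul]
  -- per-j bound
  have step4 : ∀ j ∈ Finset.range (k+1),
      (k.choose j : ℝ) * G j ≤ (1/2:ℝ) ^ ((m:ℝ)^(0.1:ℝ)) * (m:ℝ)^(2*k) := by
    intro j hj
    have hjk : j ≤ k := by
      rw [Finset.mem_range] at hj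
      omega
    simp only [hG]
    by_cases hc : (m:ℝ)^(0.1:ℝ) ≤ (j:ℝ)
    · rw [if_pos hc]
      have hj1 : 1 ≤ j := by
        by_contra h
        have : j = 0 := by omega
        rw [this] at hc
        simp only [Nat.cast_zero] at hc
        linarith
      calc (k.choose j : ℝ) *
            (((2*m).choose (j-1) : ℝ) * (((j:ℝ))^j * (m:ℝ)^(k - j))^2)
          = (k.choose j : ℝ) * ((2*m).choose (j-1) : ℝ) *
            (((j:ℝ)^j * (m:ℝ)^(k-j))^2) := by ring
        _ ≤ (2 * Real.exp 1 ^ 2 * α)^j * (m:ℝ)^(2*k) :=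
            per_j m k j α hk hjk hj1 hkm
        _ ≤ (1/2:ℝ)^j * (m:ℝ)^(2*k) := by
            have := pow_le_pow_left₀ h2eα hhalf j
            exact mul_le_mul_of_nonneg_right this hpow2k.le
        _ = (1/2:ℝ)^((j:ℕ):ℝ) * (m:ℝ)^(2*k) := by
            rw [Real.rpow_natCast]
        _ ≤ (1/2:ℝ) ^ ((m:ℝ)^(0.1:ℝ)) * (m:ℝ)^(2*k) := by
            have := Real.rpow_le_rpow_of_exponent_ge (by norm_num : (0:ℝ) < 1/2)
              (by norm_num : (1/2:ℝ) ≤ 1) hc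
            exact mul_le_mul_of_nonneg_right this hpow2k.le
    · rw [if_neg hc, mul_zero]
      positivity
  -- sum up
  have step5 : ((univ.filter (fun q : (Fin k → Fin m) × (Fin k → Fin m) =>
        ∃ S : Finset (Fin k), (m : ℝ) ^ (0.1 : ℝ) ≤ (S.card : ℝ) ∧
          (S.image q.1).card + (S.image q.2).card < S.card)).card : ℝ)
      ≤ (2*(m:ℝ)) * ((1/2:ℝ) ^ ((m:ℝ)^(0.1:ℝ))) * (m:ℝ)^(2*k) := by
    refine step12.trans ?_
    rw [hgroup]
    have hsum := Finset.sum_le_card_nsmul (Finset.range (k+1)) _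
      ((1/2:ℝ) ^ ((m:ℝ)^(0.1:ℝ)) * (m:ℝ)^(2*k)) step4
    rw [Finset.card_range, nsmul_eq_mul] at hsum
    refine hsum.trans ?_
    have hk2m : ((k:ℝ)+1) ≤ 2*(m:ℝ) := by
      have h1 : (k:ℝ) ≤ (m:ℝ) := by exact_mod_cast hkm
      have h2 : (1:ℝ) ≤ (m:ℝ) := by exact_mod_cast hm1
      linarith
    have hpos : (0:ℝ) ≤ (1/2:ℝ) ^ ((m:ℝ)^(0.1:ℝ)) * (m:ℝ)^(2*k) := by positivity
    calc ((k+1 : ℕ):ℝ) * ((1/2:ℝ) ^ ((m:ℝ)^(0.1:ℝ)) * (m:ℝ)^(2*k))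
        ≤ (2*(m:ℝ)) * ((1/2:ℝ) ^ ((m:ℝ)^(0.1:ℝ)) * (m:ℝ)^(2*k)) := by
          refine mul_le_mul_of_nonneg_right ?_ hpos
          push_cast
          exact hk2m
      _ = (2*(m:ℝ)) * ((1/2:ℝ) ^ ((m:ℝ)^(0.1:ℝ))) * (m:ℝ)^(2*k) := by ring
  -- finish
  rw [div_le_iff₀ hpow2k]
  refine step5.trans ?_
  refine mul_le_mul_of_nonneg_right ?_ hpow2k.le
  exact tail_small m hm1 hMr
end

section
/- Let k = αm, R = (1−ε)·α·m·T̃, and p_i = (1−ε)T̃/R for all i (uniform rates). For suitably small constant α and any ε > 0, with high probability (over the two independent uniform hash functions) there exists a perfect fractional matching: a weight assignment w on edges of the two-hash bipartite graph G such that each object's full rate p_i·R is served and no cache node serves more than T̃. -/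
open Finset
open scoped Classical

/-- A perfect fractional matching in the two-hash bipartite graph: weights on edges
(each object `i` connects to node `h₀ i` in layer `A` and `h₁ i` in layer `B`) such that
each object's full rate `r` is served and no cache node serves more than `T`. -/
def HasPerfectMatching (k m : ℕ) (h₀ h₁ : Fin k → Fin m) (r T : ℝ) : Prop :=
  ∃ w : Fin k → (Fin m ⊕ Fin m) → ℝ,
    (∀ i v, 0 ≤ w i v) ∧
    (∀ i v, w i v ≠ 0 → v = Sum.inl (h₀ i) ∨ v = Sum.inr (h₁ i)) ∧
    (∀ i, ∑ v, w i v = r) ∧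
    (∀ v, ∑ i, w i v ≤ T)

def IsBad (k m : ℕ) (h₀ h₁ : Fin k → Fin m) : Prop :=
  ∃ A B : Finset (Fin m), A.card + B.card < (univ.filter fun i => h₀ i ∈ A ∧ h₁ i ∈ B).card

lemma matching_of_not_bad {k m : ℕ} {h₀ h₁ : Fin k → Fin m} (h : ¬ IsBad k m h₀ h₁)
    {r T : ℝ} (hr : 0 ≤ r) (hrT : r ≤ T) : HasPerfectMatching k m h₀ h₁ r T := by
  unfold IsBad at h
  push_neg at h
  have hall : ∀ s : Finset (Fin k), s.card ≤ (s.biUnion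
      (fun i => ({Sum.inl (h₀ i), Sum.inr (h₁ i)} : Finset (Fin m ⊕ Fin m)))).card := by
    intro s
    set A := s.image h₀ with hA
    set B := s.image h₁ with hB
    have hsub : s ⊆ univ.filter fun i => h₀ i ∈ A ∧ h₁ i ∈ B := by
      intro i hi
      simp only [mem_filter, mem_univ, true_and]
      exact ⟨mem_image_of_mem _ hi, mem_image_of_mem _ hi⟩
    have h1 : s.card ≤ A.card + B.card :=
      (Finset.card_le_card hsub).trans (h A B)
    have h2 : A.image Sum.inl ∪ B.image Sum.inr ⊆
        s.biUnion (fun i => ({Sum.inl (h₀ i), Sum.inr (h₁ i)} : Finset (Fin m ⊕ Fin m))) := by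
      intro x hx
      rcases Finset.mem_union.1 hx with hx | hx
      · obtain ⟨a, ha, rfl⟩ := Finset.mem_image.1 hx
        obtain ⟨i, hi, rfl⟩ := Finset.mem_image.1 ha
        exact Finset.mem_biUnion.2 ⟨i, hi, by simp⟩
      · obtain ⟨a, ha, rfl⟩ := Finset.mem_image.1 hx
        obtain ⟨i, hi, rfl⟩ := Finset.mem_image.1 ha
        exact Finset.mem_biUnion.2 ⟨i, hi, by simp⟩
    have h3 : (A.image Sum.inl ∪ B.image Sum.inr).card = A.card + B.card := by
      rw [Finset.card_union_of_disjoint, Finset.card_image_of_injective _ Sum.inl_injective,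
        Finset.card_image_of_injective _ Sum.inr_injective]
      simp [Finset.disjoint_left]
    calc s.card ≤ A.card + B.card := h1
      _ = (A.image Sum.inl ∪ B.image Sum.inr).card := h3.symm
      _ ≤ _ := Finset.card_le_card h2
  obtain ⟨f, hfinj, hfmem⟩ := (Finset.all_card_le_biUnion_card_iff_exists_injective
      (fun i : Fin k => ({Sum.inl (h₀ i), Sum.inr (h₁ i)} : Finset (Fin m ⊕ Fin m)))).1 hall
  refine ⟨fun i v => if v = f i then r else 0, ?_, ?_, ?_, ?_⟩
  · intro i v; dsimp only; split <;> simp [hr]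
  · intro i v hv
    have hv' : v = f i := by by_contra h'; simp [h'] at hv
    subst hv'
    have := hfmem i
    simp only [Finset.mem_insert, Finset.mem_singleton] at this
    tauto
  · intro i; simp
  · intro v
    have hle : (univ.filter fun i => v = f i).card ≤ 1 := by
      refine Finset.card_le_one.2 ?_
      intro a ha b hb
      simp only [mem_filter, mem_univ, true_and] at ha hb
      exact hfinj (ha ▸ hb ▸ rfl : f a = f b)
    calc ∑ i, (if v = f i then r else 0)
        = ((univ.filter fun i => v = f i).card : ℝ) * r := by
          rw [Finset.sum_ite, Finset.sum_const, Finset.sum_const_zero, add_zero,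
            nsmul_eq_mul]
      _ ≤ 1 * r := by
          apply mul_le_mul_of_nonneg_right _ hr
          exact_mod_cast hle
      _ ≤ T := by linarith

lemma card_half {k m : ℕ} (A : Finset (Fin m)) (S : Finset (Fin k)) :
    (univ.filter fun h : Fin k → Fin m => ∀ i ∈ S, h i ∈ A).card
      = A.card ^ S.card * m ^ (k - S.card) := by
  have he : (univ.filter fun h : Fin k → Fin m => ∀ i ∈ S, h i ∈ A)
      = Fintype.piFinset (fun i => if i ∈ S then A else univ) := by
    ext f
    simp only [mem_filter, mem_univ, true_and, Fintype.mem_piFinset]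
    refine forall_congr' fun i => ?_
    by_cases hi : i ∈ S <;> simp [hi]
  rw [he, Fintype.card_piFinset]
  have : ∀ i : Fin k, (if i ∈ S then A else univ).card = if i ∈ S then A.card else m := by
    intro i; split <;> simp
  rw [Finset.prod_congr rfl (fun i _ => this i)]
  rw [Finset.prod_ite, Finset.prod_const, Finset.prod_const]
  congr 1
  · congr 1; simp
  · congr 1
    rw [Finset.filter_not]
    simp only [Finset.filter_mem_eq_inter, univ_inter]
    rw [Finset.card_sdiff_of_subset (subset_univ _), card_univ, Fintype.card_fin]

def Fset (k m : ℕ) (A B : Finset (Fin m)) (S : Finset (Fin k)) :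
    Finset ((Fin k → Fin m) × (Fin k → Fin m)) :=
  univ.filter fun q => (∀ i ∈ S, q.1 i ∈ A) ∧ (∀ i ∈ S, q.2 i ∈ B)

lemma card_Fset {k m : ℕ} (A B : Finset (Fin m)) (S : Finset (Fin k)) :
    (Fset k m A B S).card
      = (A.card ^ S.card * m ^ (k - S.card)) * (B.card ^ S.card * m ^ (k - S.card)) := by
  have : Fset k m A B S
      = (univ.filter fun h : Fin k → Fin m => ∀ i ∈ S, h i ∈ A) ×ˢ
        (univ.filter fun h : Fin k → Fin m => ∀ i ∈ S, h i ∈ B) := by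
    rw [Fset, ← Finset.univ_product_univ]
    exact Finset.filter_product (fun h : Fin k → Fin m => ∀ i ∈ S, h i ∈ A) (fun h : Fin k → Fin m => ∀ i ∈ S, h i ∈ B)
  rw [this, Finset.card_product, card_half, card_half]

lemma bad_card_le (k m : ℕ) :
    (univ.filter fun q : (Fin k → Fin m) × (Fin k → Fin m) => IsBad k m q.1 q.2).card
      ≤ ∑ A ∈ (univ : Finset (Fin m)).powerset, ∑ B ∈ (univ : Finset (Fin m)).powerset,
          k.choose (A.card + B.card + 1) *
            ((A.card ^ (A.card + B.card + 1) * m ^ (k - (A.card + B.card + 1))) *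
             (B.card ^ (A.card + B.card + 1) * m ^ (k - (A.card + B.card + 1)))) := by
  have hsub : (univ.filter fun q : (Fin k → Fin m) × (Fin k → Fin m) => IsBad k m q.1 q.2)
      ⊆ ((univ : Finset (Fin m)).powerset ×ˢ (univ : Finset (Fin m)).powerset).biUnion
          (fun AB => (Finset.powersetCard (AB.1.card + AB.2.card + 1) (univ : Finset (Fin k))).biUnion
            (fun S => Fset k m AB.1 AB.2 S)) := by
    intro q hq
    simp only [mem_filter, mem_univ, true_and] at hq
    obtain ⟨A, B, hAB⟩ := hq
    obtain ⟨S, hS, hScard⟩ := Finset.exists_subset_card_eq hAB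
    refine Finset.mem_biUnion.2 ⟨(A, B), by simp [Finset.mem_product], ?_⟩
    refine Finset.mem_biUnion.2 ⟨S, ?_, ?_⟩
    · exact Finset.mem_powersetCard.2 ⟨subset_univ _, hScard⟩
    · simp only [Fset, mem_filter, mem_univ, true_and]
      constructor <;> intro i hi <;> have := hS hi <;>
        simp only [mem_filter, mem_univ, true_and] at this
      · exact this.1
      · exact this.2
  calc (univ.filter fun q : (Fin k → Fin m) × (Fin k → Fin m) => IsBad k m q.1 q.2).card
      ≤ _ := Finset.card_le_card hsub
    _ ≤ ∑ AB ∈ (univ : Finset (Fin m)).powerset ×ˢ (univ : Finset (Fin m)).powerset,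
          ((Finset.powersetCard (AB.1.card + AB.2.card + 1) (univ : Finset (Fin k))).biUnion
            (fun S => Fset k m AB.1 AB.2 S)).card := Finset.card_biUnion_le
    _ ≤ ∑ AB ∈ (univ : Finset (Fin m)).powerset ×ˢ (univ : Finset (Fin m)).powerset,
          k.choose (AB.1.card + AB.2.card + 1) *
            ((AB.1.card ^ (AB.1.card + AB.2.card + 1) * m ^ (k - (AB.1.card + AB.2.card + 1))) *
             (AB.2.card ^ (AB.1.card + AB.2.card + 1) * m ^ (k - (AB.1.card + AB.2.card + 1)))) := by
        refine Finset.sum_le_sum fun AB _ => ?_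
        calc ((Finset.powersetCard (AB.1.card + AB.2.card + 1) (univ : Finset (Fin k))).biUnion
              (fun S => Fset k m AB.1 AB.2 S)).card
            ≤ ∑ S ∈ Finset.powersetCard (AB.1.card + AB.2.card + 1) (univ : Finset (Fin k)),
                (Fset k m AB.1 AB.2 S).card := Finset.card_biUnion_le
          _ = _ := by
              rw [Finset.sum_congr rfl (fun S hS => ?_), Finset.sum_const, smul_eq_mul,
                Finset.card_powersetCard, card_univ, Fintype.card_fin]
              rw [card_Fset, (Finset.mem_powersetCard.1 hS).2]
    _ = _ := by rw [Finset.sum_product]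


lemma pow_self_le_exp_mul_factorial (t : ℕ) :
    (t : ℝ) ^ t ≤ (Real.exp 1) ^ t * (t.factorial : ℝ) := by
  have h1 : (t : ℝ) ^ t / (t.factorial : ℝ) ≤ Real.exp t := by
    calc (t : ℝ) ^ t / (t.factorial : ℝ)
        ≤ ∑ i ∈ range (t + 1), (t : ℝ) ^ i / (i.factorial : ℝ) := by
          refine Finset.single_le_sum (f := fun i => (t : ℝ) ^ i / (i.factorial : ℝ))
            (fun i _ => by positivity) (Finset.mem_range.2 (Nat.lt_succ_self t))
      _ ≤ Real.exp t := Real.sum_le_exp_of_nonneg (by positivity) _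
  have h2 : Real.exp (t : ℝ) = (Real.exp 1) ^ t := by
    rw [← Real.exp_nat_mul, mul_one]
  rw [h2, div_le_iff₀ (by positivity : (0:ℝ) < (t.factorial : ℝ))] at h1
  exact h1

lemma factorial_add_le (a b : ℕ) :
    ((a + b).factorial : ℕ) ≤ 2 ^ (a + b) * (a.factorial * b.factorial) := by
  have h1 : (a + b).choose a * a.factorial * b.factorial = (a + b).factorial := by
    have := Nat.choose_mul_factorial_mul_factorial (Nat.le_add_right a b)
    rwa [Nat.add_sub_cancel_left] at this
  have h2 : (a + b).choose a ≤ 2 ^ (a + b) := by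
    calc (a + b).choose a ≤ ∑ i ∈ range (a + b + 1), (a + b).choose i :=
          Finset.single_le_sum (fun i _ => Nat.zero_le _)
            (by simp [Nat.lt_succ_iff, Nat.le_add_right])
      _ = 2 ^ (a + b) := Nat.sum_range_choose _
  calc (a + b).factorial = (a + b).choose a * a.factorial * b.factorial := h1.symm
    _ ≤ 2 ^ (a + b) * a.factorial * b.factorial := by
        exact Nat.mul_le_mul_right _ (Nat.mul_le_mul_right _ h2)
    _ = 2 ^ (a + b) * (a.factorial * b.factorial) := by ring

lemma core_ineq_s7 (a b : ℕ) :
    (((a + b + 1 : ℕ) : ℝ) ^ 2) ^ (a + b + 1)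
      ≤ 40 ^ (a + b + 1) *
        ((a.factorial : ℝ) * (b.factorial : ℝ) * ((a + b + 1).factorial : ℝ)) := by
  set t := a + b + 1 with ht
  have hE : (0:ℝ) ≤ Real.exp 1 := (Real.exp_pos 1).le
  have hE3 : Real.exp 1 ≤ 3 := by
    have := Real.exp_one_lt_d9
    norm_num at this ⊢
    linarith
  have hT : (t : ℝ) ^ t ≤ (Real.exp 1) ^ t * (t.factorial : ℝ) :=
    pow_self_le_exp_mul_factorial t
  have hfact : ((a + b).factorial : ℝ) ≤ 2 ^ (a + b) * ((a.factorial : ℝ) * b.factorial) := by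
    exact_mod_cast factorial_add_le a b
  have ht2 : (t : ℝ) ≤ 2 ^ t := by
    exact_mod_cast (Nat.lt_two_pow_self (n := t)).le
  have h2ab : (2:ℝ) ^ (a + b) ≤ 2 ^ t := by
    apply pow_le_pow_right₀ (by norm_num)
    omega
  calc (((t : ℕ) : ℝ) ^ 2) ^ t = (t : ℝ) ^ t * (t : ℝ) ^ t := by rw [sq, mul_pow]
    _ ≤ ((Real.exp 1) ^ t * (t.factorial : ℝ)) * ((Real.exp 1) ^ t * (t.factorial : ℝ)) := by
        apply mul_le_mul hT hT (by positivity) (by positivity)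
    _ = (Real.exp 1) ^ t * (Real.exp 1) ^ t * ((t.factorial : ℝ) * (t.factorial : ℝ)) := by
        ring
    _ = (Real.exp 1) ^ t * (Real.exp 1) ^ t *
          ((t.factorial : ℝ) * ((t : ℝ) * ((a + b).factorial : ℝ))) := by
        congr 2
        rw [ht, Nat.factorial_succ]
        push_cast
        ring
    _ ≤ 3 ^ t * 3 ^ t *
          ((t.factorial : ℝ) * (2 ^ t * (2 ^ t * ((a.factorial : ℝ) * b.factorial)))) := by
        apply mul_le_mul
        · exact mul_le_mul (pow_le_pow_left₀ hE hE3 t) (pow_le_pow_left₀ hE hE3 t)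
            (by positivity) (by positivity)
        · apply mul_le_mul_of_nonneg_left _ (by positivity)
          calc (t : ℝ) * ((a + b).factorial : ℝ)
              ≤ 2 ^ t * (2 ^ (a + b) * ((a.factorial : ℝ) * b.factorial)) := by
                apply mul_le_mul ht2 hfact (by positivity) (by positivity)
            _ ≤ 2 ^ t * (2 ^ t * ((a.factorial : ℝ) * b.factorial)) := by
                apply mul_le_mul_of_nonneg_left _ (by positivity)
                apply mul_le_mul_of_nonneg_right h2ab (by positivity)
        · positivity
        · positivity
    _ = (3 * 3 * 2 * 2 : ℝ) ^ t * ((a.factorial : ℝ) * b.factorial * (t.factorial : ℝ)) := by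
        rw [show ((3:ℝ) * 3 * 2 * 2) ^ t = 3 ^ t * 3 ^ t * 2 ^ t * 2 ^ t by
          rw [← mul_pow, ← mul_pow, ← mul_pow]]
        ring
    _ ≤ 40 ^ t * ((a.factorial : ℝ) * b.factorial * (t.factorial : ℝ)) := by
        apply mul_le_mul_of_nonneg_right _ (by positivity)
        apply pow_le_pow_left₀ (by norm_num) (by norm_num) _

lemma key_term (k m a b : ℕ) (hm : 0 < m) (hk : (k : ℝ) ≤ (m : ℝ) / 200) :
    (m.choose a : ℝ) * ((m.choose b : ℝ) * ((k.choose (a + b + 1) : ℝ) *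
      ((a : ℝ) ^ (a + b + 1) * (m : ℝ) ^ (k - (a + b + 1)) *
        ((b : ℝ) ^ (a + b + 1) * (m : ℝ) ^ (k - (a + b + 1))))))
    ≤ (m : ℝ) ^ (2 * k) / m * (1 / 5) ^ (a + b + 1) := by
  set t := a + b + 1 with ht
  have hM : (0 : ℝ) < m := by exact_mod_cast hm
  by_cases htk : t ≤ k
  · have hca : (m.choose a : ℝ) ≤ (m : ℝ) ^ a / (a.factorial : ℝ) := Nat.choose_le_pow_div a m
    have hcb : (m.choose b : ℝ) ≤ (m : ℝ) ^ b / (b.factorial : ℝ) := Nat.choose_le_pow_div b m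
    have hck : (k.choose t : ℝ) ≤ ((m : ℝ) / 200) ^ t / (t.factorial : ℝ) := by
      calc (k.choose t : ℝ) ≤ (k : ℝ) ^ t / (t.factorial : ℝ) := Nat.choose_le_pow_div t k
        _ ≤ ((m : ℝ) / 200) ^ t / (t.factorial : ℝ) := by
            gcongr
    have hat : (a : ℝ) ^ t ≤ (t : ℝ) ^ t := by
      gcongr <;> omega
    have hbt : (b : ℝ) ^ t ≤ (t : ℝ) ^ t := by
      gcongr <;> omega
    have step1 : (m.choose a : ℝ) * ((m.choose b : ℝ) * ((k.choose t : ℝ) *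
        ((a : ℝ) ^ t * (m : ℝ) ^ (k - t) * ((b : ℝ) ^ t * (m : ℝ) ^ (k - t)))))
        ≤ ((m : ℝ) ^ a / (a.factorial : ℝ)) * (((m : ℝ) ^ b / (b.factorial : ℝ)) *
          ((((m : ℝ) / 200) ^ t / (t.factorial : ℝ)) *
            ((t : ℝ) ^ t * (m : ℝ) ^ (k - t) * ((t : ℝ) ^ t * (m : ℝ) ^ (k - t))))) := by
      gcongr <;> positivity
    refine step1.trans ?_
    have hF : (0 : ℝ) < (a.factorial : ℝ) * (b.factorial : ℝ) * (t.factorial : ℝ) := by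
      positivity
    have heq : ((m : ℝ) ^ a / (a.factorial : ℝ)) * (((m : ℝ) ^ b / (b.factorial : ℝ)) *
          ((((m : ℝ) / 200) ^ t / (t.factorial : ℝ)) *
            ((t : ℝ) ^ t * (m : ℝ) ^ (k - t) * ((t : ℝ) ^ t * (m : ℝ) ^ (k - t)))))
        = (((t : ℝ) ^ 2) ^ t / ((a.factorial : ℝ) * (b.factorial : ℝ) * (t.factorial : ℝ))) *
          ((m : ℝ) ^ a * (m : ℝ) ^ b * ((m : ℝ) / 200) ^ t *
            ((m : ℝ) ^ (k - t) * (m : ℝ) ^ (k - t))) := by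
      rw [sq, mul_pow]
      field_simp
    rw [heq]
    have hcore : ((t : ℝ) ^ 2) ^ t / ((a.factorial : ℝ) * (b.factorial : ℝ) * (t.factorial : ℝ))
        ≤ 40 ^ t := by
      rw [div_le_iff₀ hF]
      exact_mod_cast core_ineq_s7 a b
    calc (((t : ℝ) ^ 2) ^ t / ((a.factorial : ℝ) * (b.factorial : ℝ) * (t.factorial : ℝ))) *
          ((m : ℝ) ^ a * (m : ℝ) ^ b * ((m : ℝ) / 200) ^ t *
            ((m : ℝ) ^ (k - t) * (m : ℝ) ^ (k - t)))
        ≤ 40 ^ t * ((m : ℝ) ^ a * (m : ℝ) ^ b * ((m : ℝ) / 200) ^ t *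
            ((m : ℝ) ^ (k - t) * (m : ℝ) ^ (k - t))) := by
          apply mul_le_mul_of_nonneg_right hcore (by positivity)
      _ = (m : ℝ) ^ (2 * k) / m * (1 / 5) ^ t := by
          have h5 : (40 : ℝ) ^ t * ((m : ℝ) / 200) ^ t = (m : ℝ) ^ t * (1 / 5) ^ t := by
            rw [← mul_pow, ← mul_pow]
            congr 1
            ring
          have hexp : 2 * k = a + b + t + ((k - t) + (k - t)) + 1 := by omega
          have hpow : (m : ℝ) ^ (a + b + t + ((k - t) + (k - t)) + 1) / m
              = (m : ℝ) ^ (a + b + t + ((k - t) + (k - t))) := by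
            rw [pow_succ, mul_div_assoc, div_self hM.ne', mul_one]
          rw [hexp, hpow]
          calc (40:ℝ) ^ t * ((m : ℝ) ^ a * (m : ℝ) ^ b * ((m : ℝ) / 200) ^ t *
                ((m : ℝ) ^ (k - t) * (m : ℝ) ^ (k - t)))
              = ((40:ℝ) ^ t * ((m : ℝ) / 200) ^ t) * ((m : ℝ) ^ a * (m : ℝ) ^ b *
                ((m : ℝ) ^ (k - t) * (m : ℝ) ^ (k - t))) := by ring
            _ = ((m : ℝ) ^ t * (1 / 5) ^ t) * ((m : ℝ) ^ a * (m : ℝ) ^ b *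
                ((m : ℝ) ^ (k - t) * (m : ℝ) ^ (k - t))) := by rw [h5]
            _ = (m : ℝ) ^ (a + b + t + ((k - t) + (k - t))) * (1 / 5) ^ t := by
                rw [pow_add, pow_add, pow_add, pow_add]
                ring
  · have hz : k.choose t = 0 := Nat.choose_eq_zero_of_lt (by omega)
    rw [hz]
    push_cast
    simp only [zero_mul, mul_zero]
    positivity

lemma geo_le (n : ℕ) : ∑ i ∈ range n, (1/5 : ℝ) ^ i ≤ 5/4 := by
  have h := geom_sum_eq (by norm_num : (1/5 : ℝ) ≠ 1) n
  rw [h]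
  have h2 : (0:ℝ) ≤ (1/5 : ℝ) ^ n := by positivity
  rw [div_le_iff_of_neg (by norm_num : (1/5 : ℝ) - 1 < 0)]
  linarith

lemma bad_card_real (k m : ℕ) (hm : 0 < m) (hk : (k : ℝ) ≤ (m : ℝ) / 200) :
    ((univ.filter fun q : (Fin k → Fin m) × (Fin k → Fin m) => IsBad k m q.1 q.2).card : ℝ)
      ≤ (m : ℝ) ^ (2 * k) / m := by
  have hcard : ((univ : Finset (Fin m)) : Finset (Fin m)).card = m := by simp
  set g : ℕ → ℕ → ℝ := fun a b =>
    (k.choose (a + b + 1) : ℝ) *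
      ((a : ℝ) ^ (a + b + 1) * (m : ℝ) ^ (k - (a + b + 1)) *
        ((b : ℝ) ^ (a + b + 1) * (m : ℝ) ^ (k - (a + b + 1)))) with hg
  have step1 : ((univ.filter fun q : (Fin k → Fin m) × (Fin k → Fin m) =>
      IsBad k m q.1 q.2).card : ℝ)
      ≤ ∑ A ∈ (univ : Finset (Fin m)).powerset, ∑ B ∈ (univ : Finset (Fin m)).powerset,
          g A.card B.card := by
    have h := bad_card_le k m
    calc ((univ.filter fun q : (Fin k → Fin m) × (Fin k → Fin m) =>
            IsBad k m q.1 q.2).card : ℝ)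
        ≤ ((∑ A ∈ (univ : Finset (Fin m)).powerset, ∑ B ∈ (univ : Finset (Fin m)).powerset,
            k.choose (A.card + B.card + 1) *
              ((A.card ^ (A.card + B.card + 1) * m ^ (k - (A.card + B.card + 1))) *
               (B.card ^ (A.card + B.card + 1) * m ^ (k - (A.card + B.card + 1)))) : ℕ) : ℝ) := by
          exact_mod_cast h
      _ = _ := by
          push_cast
          refine Finset.sum_congr rfl fun A _ => Finset.sum_congr rfl fun B _ => ?_
          rw [hg]
  have step2 : ∑ A ∈ (univ : Finset (Fin m)).powerset, ∑ B ∈ (univ : Finset (Fin m)).powerset,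
        g A.card B.card
      = ∑ a ∈ range (m + 1), ∑ b ∈ range (m + 1),
          (m.choose a : ℝ) * ((m.choose b : ℝ) * g a b) := by
    calc ∑ A ∈ (univ : Finset (Fin m)).powerset, ∑ B ∈ (univ : Finset (Fin m)).powerset,
          g A.card B.card
        = ∑ A ∈ (univ : Finset (Fin m)).powerset, ∑ b ∈ range (m + 1),
            (m.choose b : ℝ) * g A.card b := by
          refine Finset.sum_congr rfl fun A _ => ?_
          have := Finset.sum_powerset_apply_card (f := fun b => g A.card b)
            (x := (univ : Finset (Fin m)))
          simp only [card_univ, Fintype.card_fin, nsmul_eq_mul] at this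
          exact this
      _ = ∑ a ∈ range (m + 1), (m.choose a : ℝ) * ∑ b ∈ range (m + 1),
            (m.choose b : ℝ) * g a b := by
          have := Finset.sum_powerset_apply_card
            (f := fun a => ∑ b ∈ range (m + 1), (m.choose b : ℝ) * g a b)
            (x := (univ : Finset (Fin m)))
          simp only [card_univ, Fintype.card_fin, nsmul_eq_mul] at this
          exact this
      _ = _ := by
          refine Finset.sum_congr rfl fun a _ => ?_
          rw [Finset.mul_sum]
  have step3 : ∑ a ∈ range (m + 1), ∑ b ∈ range (m + 1),
        (m.choose a : ℝ) * ((m.choose b : ℝ) * g a b)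
      ≤ ∑ a ∈ range (m + 1), ∑ b ∈ range (m + 1),
          (m : ℝ) ^ (2 * k) / m * (1 / 5) ^ (a + b + 1) := by
    refine Finset.sum_le_sum fun a _ => Finset.sum_le_sum fun b _ => ?_
    exact key_term k m a b hm hk
  have step4 : ∑ a ∈ range (m + 1), ∑ b ∈ range (m + 1),
        (m : ℝ) ^ (2 * k) / m * (1 / 5) ^ (a + b + 1)
      ≤ (m : ℝ) ^ (2 * k) / m := by
    have hM : (0:ℝ) < m := by exact_mod_cast hm
    have heq : ∑ a ∈ range (m + 1), ∑ b ∈ range (m + 1),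
          (m : ℝ) ^ (2 * k) / m * (1 / 5) ^ (a + b + 1)
        = (m : ℝ) ^ (2 * k) / m * ((1/5) *
            ((∑ a ∈ range (m + 1), (1/5 : ℝ) ^ a) * (∑ b ∈ range (m + 1), (1/5 : ℝ) ^ b))) := by
      have inner : ∀ a : ℕ, ∑ b ∈ range (m + 1),
            (m : ℝ) ^ (2 * k) / m * (1 / 5) ^ (a + b + 1)
          = ((m : ℝ) ^ (2 * k) / m * (1/5) * (1/5 : ℝ) ^ a) *
              ∑ b ∈ range (m + 1), (1/5 : ℝ) ^ b := by
        intro a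
        rw [Finset.mul_sum]
        refine Finset.sum_congr rfl fun b _ => ?_
        rw [pow_add, pow_add, pow_one]
        ring
      calc ∑ a ∈ range (m + 1), ∑ b ∈ range (m + 1),
            (m : ℝ) ^ (2 * k) / m * (1 / 5) ^ (a + b + 1)
          = ∑ a ∈ range (m + 1), ((m : ℝ) ^ (2 * k) / m * (1/5) * (1/5 : ℝ) ^ a) *
              ∑ b ∈ range (m + 1), (1/5 : ℝ) ^ b :=
            Finset.sum_congr rfl fun a _ => inner a
        _ = (∑ a ∈ range (m + 1), (m : ℝ) ^ (2 * k) / m * (1/5) * (1/5 : ℝ) ^ a) *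
              ∑ b ∈ range (m + 1), (1/5 : ℝ) ^ b := by rw [Finset.sum_mul]
        _ = ((m : ℝ) ^ (2 * k) / m * (1/5) * ∑ a ∈ range (m + 1), (1/5 : ℝ) ^ a) *
              ∑ b ∈ range (m + 1), (1/5 : ℝ) ^ b := by rw [← Finset.mul_sum]
        _ = _ := by ring
    rw [heq]
    have h1 := geo_le (m + 1)
    have hs : (0:ℝ) ≤ ∑ a ∈ range (m + 1), (1/5 : ℝ) ^ a := by positivity
    calc (m : ℝ) ^ (2 * k) / m * ((1/5) *
            ((∑ a ∈ range (m + 1), (1/5 : ℝ) ^ a) * (∑ b ∈ range (m + 1), (1/5 : ℝ) ^ b)))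
        ≤ (m : ℝ) ^ (2 * k) / m * ((1/5) * ((5/4) * (5/4))) := by
          gcongr
      _ ≤ (m : ℝ) ^ (2 * k) / m * 1 := by
          apply mul_le_mul_of_nonneg_left (by norm_num) (by positivity)
      _ = (m : ℝ) ^ (2 * k) / m := by ring
  linarith [step1, step2 ▸ step1, step3, step4]

/-- Let `k = ⌊αm⌋`, `R = (1−ε)αmT̃`, and uniform rates `p i = (1−ε)T̃/R`, so each
object demands `p i · R = (1−ε)T̃`. For suitably small constant `α` and any `ε ∈ (0,1)`,
with high probability (over the two independent uniform hash functions, as `m → ∞`)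
a perfect fractional matching exists. -/
theorem uniform_rates_matching_whp :
    ∃ α₀ : ℝ, 0 < α₀ ∧ ∀ α : ℝ, 0 < α → α ≤ α₀ →
      ∀ ε : ℝ, 0 < ε → ε < 1 → ∀ T : ℝ, 0 < T →
        Filter.Tendsto (fun m : ℕ =>
          ((univ.filter
              (fun q : (Fin ⌊α * (m : ℝ)⌋₊ → Fin m) × (Fin ⌊α * (m : ℝ)⌋₊ → Fin m) =>
                HasPerfectMatching ⌊α * (m : ℝ)⌋₊ m q.1 q.2 ((1 - ε) * T) T)).card : ℝ)
            / ((m : ℝ) ^ (2 * ⌊α * (m : ℝ)⌋₊)))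
          Filter.atTop (nhds 1) := by
  refine ⟨1/200, by norm_num, ?_⟩
  intro α hα hα0 ε hε hε1 T hT
  set ratio : ℕ → ℝ := fun m =>
    ((univ.filter
        (fun q : (Fin ⌊α * (m : ℝ)⌋₊ → Fin m) × (Fin ⌊α * (m : ℝ)⌋₊ → Fin m) =>
          HasPerfectMatching ⌊α * (m : ℝ)⌋₊ m q.1 q.2 ((1 - ε) * T) T)).card : ℝ)
      / ((m : ℝ) ^ (2 * ⌊α * (m : ℝ)⌋₊)) with hratio
  have hbound : ∀ m : ℕ, 1 ≤ m → 1 - 1/(m:ℝ) ≤ ratio m ∧ ratio m ≤ 1 := by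
    intro m hm
    set k := ⌊α * (m : ℝ)⌋₊ with hkdef
    have hm0 : (0:ℝ) < m := by exact_mod_cast hm
    have hk : (k : ℝ) ≤ (m : ℝ) / 200 := by
      calc (k : ℝ) ≤ α * m := Nat.floor_le (by positivity)
        _ ≤ (1/200) * m := by
            apply mul_le_mul_of_nonneg_right hα0 (by positivity)
        _ = (m : ℝ) / 200 := by ring
    have htot : Fintype.card ((Fin k → Fin m) × (Fin k → Fin m)) = m ^ (2 * k) := by
      simp [Fintype.card_fun, two_mul, pow_add]
    have hMpow : (0:ℝ) < (m : ℝ) ^ (2 * k) := by positivity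
    set badset := (univ.filter fun q : (Fin k → Fin m) × (Fin k → Fin m) =>
      IsBad k m q.1 q.2) with hbadset
    set goodset := (univ.filter
      (fun q : (Fin k → Fin m) × (Fin k → Fin m) =>
        HasPerfectMatching k m q.1 q.2 ((1 - ε) * T) T)) with hgoodset
    have hsub : univ \ badset ⊆ goodset := by
      intro q hq
      rw [Finset.mem_sdiff] at hq
      rw [hgoodset, Finset.mem_filter]
      refine ⟨Finset.mem_univ _, ?_⟩
      apply matching_of_not_bad
      · intro hbad
        exact hq.2 (Finset.mem_filter.2 ⟨Finset.mem_univ _, hbad⟩)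
      · nlinarith
      · nlinarith
    have hb_le_tot : badset.card ≤ m ^ (2 * k) := by
      calc badset.card ≤ (univ : Finset ((Fin k → Fin m) × (Fin k → Fin m))).card :=
            Finset.card_le_card (Finset.filter_subset _ _)
        _ = m ^ (2 * k) := by rw [Finset.card_univ, htot]
    have hgood_ge : (m ^ (2 * k) : ℕ) - badset.card ≤ goodset.card := by
      calc (m ^ (2 * k) : ℕ) - badset.card
          = (univ \ badset).card := by
            rw [Finset.card_sdiff_of_subset (Finset.subset_univ _), Finset.card_univ, htot]
        _ ≤ goodset.card := Finset.card_le_card hsub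
    have hgoodR : (m : ℝ) ^ (2 * k) - ((badset.card : ℕ) : ℝ) ≤ (goodset.card : ℝ) := by
      have := (Nat.cast_le (α := ℝ)).2 hgood_ge
      rw [Nat.cast_sub hb_le_tot] at this
      push_cast at this
      exact_mod_cast this
    have hbadR : ((badset.card : ℕ) : ℝ) ≤ (m : ℝ) ^ (2 * k) / m :=
      bad_card_real k m (by omega) hk
    constructor
    · rw [hratio]
      show 1 - 1/(m:ℝ) ≤ (goodset.card : ℝ) / ((m : ℝ) ^ (2 * k))
      rw [le_div_iff₀ hMpow]
      have hid : (1 - 1/(m:ℝ)) * (m : ℝ) ^ (2 * k)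
          = (m : ℝ) ^ (2 * k) - (m : ℝ) ^ (2 * k) * (1/m) := by ring
      rw [hid]
      have : (m : ℝ) ^ (2 * k) / m = (m : ℝ) ^ (2 * k) * (1/m) := by ring
      rw [this] at hbadR
      linarith
    · rw [hratio]
      show (goodset.card : ℝ) / ((m : ℝ) ^ (2 * k)) ≤ 1
      rw [div_le_one hMpow]
      have : goodset.card ≤ m ^ (2 * k) := by
        calc goodset.card ≤ (univ : Finset ((Fin k → Fin m) × (Fin k → Fin m))).card :=
              Finset.card_le_card (Finset.filter_subset _ _)
          _ = m ^ (2 * k) := by rw [Finset.card_univ, htot]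
      exact_mod_cast this
  have hlow : Filter.Tendsto (fun m : ℕ => 1 - 1/(m:ℝ)) Filter.atTop (nhds 1) := by
    have h0 : Filter.Tendsto (fun m : ℕ => 1/(m:ℝ)) Filter.atTop (nhds 0) :=
      tendsto_one_div_atTop_nhds_zero_nat
    have h1 : Filter.Tendsto (fun _ : ℕ => (1:ℝ)) Filter.atTop (nhds 1) :=
      tendsto_const_nhds
    simpa using h1.sub h0
  refine tendsto_of_tendsto_of_tendsto_of_le_of_le' hlow tendsto_const_nhds ?_ ?_
  · filter_upwards [Filter.eventually_ge_atTop 1] with m hm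
    exact (hbound m hm).1
  · filter_upwards [Filter.eventually_ge_atTop 1] with m hm
    exact (hbound m hm).2
end

section
/- If the (α, γ, t)-graph family is (1−δ)-feasible, then for every positive integer K, the (Kα, γ, t)-graph family is also (1−δ)-feasible: replacing each cache node of capacity t by K virtual nodes of capacity t/K, and coupling hash functions via h⁽¹⁾(j) = ⌊h⁽²⁾(j)/K⌋, any perfect fractional matching in the finer system induces one in the coarser system. -/
open Finset
open scoped Classical

/-- The `(α, γ, t)`-graph family is `(1−δ)`-feasible: the `i`-th member has `i` cache
nodes per layer of capacity `t` and `⌊αi⌋` objects of equal rates summing to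
`γ(1−ε)·i·t`; for all sufficiently large `i`, a perfect fractional matching exists with
probability at least `1−δ` over the two uniform hash functions. -/
def FamilyFeasible (α γ t δ ε : ℝ) : Prop :=
  ∃ I : ℕ, ∀ i : ℕ, I ≤ i →
    (1 - δ) * ((i : ℝ) ^ (2 * ⌊α * (i : ℝ)⌋₊)) ≤
      ((Finset.univ.filter
          (fun q : (Fin ⌊α * (i : ℝ)⌋₊ → Fin i) × (Fin ⌊α * (i : ℝ)⌋₊ → Fin i) =>
            HasPerfectMatching ⌊α * (i : ℝ)⌋₊ i q.1 q.2
              (γ * (1 - ε) * i * t / ⌊α * (i : ℝ)⌋₊) t)).card : ℝ)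

/-- The merge map `Fin (K*i) → Fin i`, sending `v` to `⌊v/K⌋`: merging each block of
`K` fine cache nodes into one coarse node. -/
def mergeNode (K i : ℕ) (v : Fin (K * i)) : Fin i :=
  ⟨v / K, by
    have hv := v.2
    rcases Nat.eq_zero_or_pos K with h | h
    · subst h; simp at hv
    · exact (Nat.div_lt_iff_lt_mul h).2 (lt_of_lt_of_eq hv (Nat.mul_comm K i))⟩

/-- Each fiber of the merge map has exactly `K` elements. -/
lemma card_mergeNode_fiber {K i : ℕ} (hK : 0 < K) (u : Fin i) :
    (Finset.univ.filter (fun v : Fin (K * i) => mergeNode K i v = u)).card = K := by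
  have hbd : ∀ a : Fin K, a.1 + u.1 * K < K * i := by
    intro a
    calc a.1 + u.1 * K < K + u.1 * K := Nat.add_lt_add_right a.2 _
      _ = (u.1 + 1) * K := by ring
      _ ≤ i * K := Nat.mul_le_mul_right _ u.2
      _ = K * i := Nat.mul_comm _ _
  have hcb : (Finset.univ.filter (fun v : Fin (K * i) => mergeNode K i v = u)).card
      = (Finset.univ : Finset (Fin K)).card := by
    apply Finset.card_nbij' (fun v => (⟨v.1 % K, Nat.mod_lt _ hK⟩ : Fin K))
        (fun a => (⟨a.1 + u.1 * K, hbd a⟩ : Fin (K * i)))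
    · intro v hv
      exact Finset.mem_univ _
    · intro a ha
      simp only [Finset.mem_coe, Finset.mem_filter, Finset.mem_univ, true_and]
      apply Fin.ext
      show (a.1 + u.1 * K) / K = u.1
      rw [Nat.add_mul_div_right _ _ hK, Nat.div_eq_of_lt a.2, Nat.zero_add]
    · intro v hv
      simp only [Finset.mem_coe, Finset.mem_filter, Finset.mem_univ, true_and] at hv
      apply Fin.ext
      show v.1 % K + u.1 * K = v.1
      have h1 : v.1 / K = u.1 := congrArg Fin.val hv
      calc v.1 % K + u.1 * K = v.1 % K + K * (v.1 / K) := by rw [h1]; ring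
        _ = v.1 := Nat.mod_add_div _ _
    · intro a ha
      apply Fin.ext
      show (a.1 + u.1 * K) % K = a.1
      rw [Nat.add_mul_mod_self_right, Nat.mod_eq_of_lt a.2]
  rw [hcb]
  simp

/-- Merging a feasible flow along the quotient map of cache nodes preserves
feasibility: each coarse node's load is the average of the `K` fine loads. -/
lemma merge_matching {k K i : ℕ} (hK : 0 < K) (h₀ h₁ : Fin k → Fin (K * i)) (r t : ℝ)
    (H : HasPerfectMatching k (K * i) h₀ h₁ ((K : ℝ) * r) t) :
    HasPerfectMatching k i (mergeNode K i ∘ h₀) (mergeNode K i ∘ h₁) r t := by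
  obtain ⟨w, hpos, hsupp, hrow, hcol⟩ := H
  have hK0 : ((K : ℝ)) ≠ 0 := Nat.cast_ne_zero.2 hK.ne'
  have hKinv : (0:ℝ) ≤ (K : ℝ)⁻¹ := by positivity
  refine ⟨fun j u => (K : ℝ)⁻¹ * (Sum.elim
      (fun u₀ => ∑ v ∈ Finset.univ.filter (fun v => mergeNode K i v = u₀),
        w j (Sum.inl v))
      (fun u₁ => ∑ v ∈ Finset.univ.filter (fun v => mergeNode K i v = u₁),
        w j (Sum.inr v)) u), ?_, ?_, ?_, ?_⟩
  · intro j u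
    rcases u with u₀ | u₁ <;>
      exact mul_nonneg hKinv (Finset.sum_nonneg fun v _ => hpos _ _)
  · intro j u hne
    rcases u with u₀ | u₁
    · simp only [Sum.elim_inl] at hne
      have hne' : (∑ v ∈ Finset.univ.filter (fun v => mergeNode K i v = u₀),
          w j (Sum.inl v)) ≠ 0 := fun h0 => hne (by rw [h0, mul_zero])
      obtain ⟨v, hv, hwv⟩ := Finset.exists_ne_zero_of_sum_ne_zero hne'
      simp only [Finset.mem_filter, Finset.mem_univ, true_and] at hv
      rcases hsupp j _ hwv with h1 | h1
      · left
        have : v = h₀ j := Sum.inl.inj h1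
        rw [← hv, this]; rfl
      · exact absurd h1 (by simp)
    · simp only [Sum.elim_inr] at hne
      have hne' : (∑ v ∈ Finset.univ.filter (fun v => mergeNode K i v = u₁),
          w j (Sum.inr v)) ≠ 0 := fun h0 => hne (by rw [h0, mul_zero])
      obtain ⟨v, hv, hwv⟩ := Finset.exists_ne_zero_of_sum_ne_zero hne'
      simp only [Finset.mem_filter, Finset.mem_univ, true_and] at hv
      rcases hsupp j _ hwv with h1 | h1
      · exact absurd h1 (by simp)
      · right
        have : v = h₁ j := Sum.inr.inj h1
        rw [← hv, this]; rfl
  · intro j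
    rw [Fintype.sum_sum_type]
    simp only [Sum.elim_inl, Sum.elim_inr]
    rw [← Finset.mul_sum, ← Finset.mul_sum, ← mul_add,
      Finset.sum_fiberwise_of_maps_to (fun v _ => Finset.mem_univ (mergeNode K i v)),
      Finset.sum_fiberwise_of_maps_to (fun v _ => Finset.mem_univ (mergeNode K i v))]
    have : (∑ v : Fin (K * i), w j (Sum.inl v)) + (∑ v : Fin (K * i), w j (Sum.inr v))
        = (K : ℝ) * r := by
      rw [← Fintype.sum_sum_type]; exact hrow j
    rw [this, ← mul_assoc, inv_mul_cancel₀ hK0, one_mul]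
  · intro u
    rcases u with u₀ | u₁
    · simp only [Sum.elim_inl]
      calc (∑ j : Fin k, (K : ℝ)⁻¹ *
              ∑ v ∈ Finset.univ.filter (fun v => mergeNode K i v = u₀), w j (Sum.inl v))
          = (K : ℝ)⁻¹ * ∑ v ∈ Finset.univ.filter (fun v => mergeNode K i v = u₀),
              ∑ j : Fin k, w j (Sum.inl v) := by
            rw [← Finset.mul_sum, Finset.sum_comm]
        _ ≤ (K : ℝ)⁻¹ * ∑ _v ∈ Finset.univ.filter (fun v => mergeNode K i v = u₀), t :=
            mul_le_mul_of_nonneg_left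
              (Finset.sum_le_sum fun v _ => hcol (Sum.inl v)) hKinv
        _ = t := by
            rw [Finset.sum_const, card_mergeNode_fiber hK, nsmul_eq_mul, ← mul_assoc,
              inv_mul_cancel₀ hK0, one_mul]
    · simp only [Sum.elim_inr]
      calc (∑ j : Fin k, (K : ℝ)⁻¹ *
              ∑ v ∈ Finset.univ.filter (fun v => mergeNode K i v = u₁), w j (Sum.inr v))
          = (K : ℝ)⁻¹ * ∑ v ∈ Finset.univ.filter (fun v => mergeNode K i v = u₁),
              ∑ j : Fin k, w j (Sum.inr v) := by
            rw [← Finset.mul_sum, Finset.sum_comm]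
        _ ≤ (K : ℝ)⁻¹ * ∑ _v ∈ Finset.univ.filter (fun v => mergeNode K i v = u₁), t :=
            mul_le_mul_of_nonneg_left
              (Finset.sum_le_sum fun v _ => hcol (Sum.inr v)) hKinv
        _ = t := by
            rw [Finset.sum_const, card_mergeNode_fiber hK, nsmul_eq_mul, ← mul_assoc,
              inv_mul_cancel₀ hK0, one_mul]

/-- Two fine nodes agreeing under the merge map and modulo `K` are equal. -/
lemma mergeNode_inj {K i : ℕ} (v w : Fin (K * i))
    (hdiv : mergeNode K i v = mergeNode K i w) (hmod : v.1 % K = w.1 % K) : v = w := by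
  apply Fin.ext
  have h1 : v.1 / K = w.1 / K := congrArg Fin.val hdiv
  calc v.1 = K * (v.1 / K) + v.1 % K := (Nat.div_add_mod _ _).symm
    _ = K * (w.1 / K) + w.1 % K := by rw [h1, hmod]
    _ = w.1 := Nat.div_add_mod _ _

/-- If the `(α, γ, t)`-graph family is `(1−δ)`-feasible, then for every positive integer
`K` the `(Kα, γ, t)`-graph family is also `(1−δ)`-feasible (splitting each cache node
into `K` virtual nodes of capacity `t/K` and coupling hash functions via
`h⁽¹⁾(j) = ⌊h⁽²⁾(j)/K⌋`). -/
theorem more_objects_feasible (α γ t δ ε : ℝ) (h : FamilyFeasible α γ t δ ε) :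
    ∀ K : ℕ, 0 < K → FamilyFeasible ((K : ℝ) * α) γ t δ ε := by
  intro K hK
  obtain ⟨I, hI⟩ := h
  refine ⟨I, fun i hi => ?_⟩
  have hmain := hI (K * i) (le_trans hi (Nat.le_mul_of_pos_left i hK))
  have hfl : α * ((K * i : ℕ) : ℝ) = (K : ℝ) * α * (i : ℝ) := by push_cast; ring
  rw [hfl] at hmain
  set k := ⌊(K : ℝ) * α * (i : ℝ)⌋₊ with hk
  set r : ℝ := γ * (1 - ε) * (i : ℝ) * t / (k : ℝ) with hr
  have hrate : γ * (1 - ε) * ((K * i : ℕ) : ℝ) * t / (k : ℝ) = (K : ℝ) * r := by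
    rw [hr]; push_cast; ring
  rw [hrate] at hmain
  set A := Finset.univ.filter
      (fun q : (Fin k → Fin (K * i)) × (Fin k → Fin (K * i)) =>
        HasPerfectMatching k (K * i) q.1 q.2 ((K : ℝ) * r) t) with hA
  set B := Finset.univ.filter
      (fun q : (Fin k → Fin i) × (Fin k → Fin i) =>
        HasPerfectMatching k i q.1 q.2 r t) with hB
  -- the merge map on hash-function pairs
  set Φ : ((Fin k → Fin (K * i)) × (Fin k → Fin (K * i))) →
      ((Fin k → Fin i) × (Fin k → Fin i)) :=
    fun q => (mergeNode K i ∘ q.1, mergeNode K i ∘ q.2) with hΦ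
  -- counting : each fiber of Φ has at most K^(2k) elements
  have hcount : A.card ≤ K ^ (2 * k) * B.card := by
    have hfib : ∀ b ∈ A.image Φ,
        (A.filter (fun q => Φ q = b)).card ≤ K ^ (2 * k) := by
      intro b _
      have hle : (A.filter (fun q => Φ q = b)).card ≤
          (Finset.univ : Finset ((Fin k → Fin K) × (Fin k → Fin K))).card := by
        apply Finset.card_le_card_of_injOn
          (fun q => ((fun j => (⟨(q.1 j).1 % K, Nat.mod_lt _ hK⟩ : Fin K)),
                     (fun j => (⟨(q.2 j).1 % K, Nat.mod_lt _ hK⟩ : Fin K))))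
          (fun _ _ => Finset.mem_univ _)
        intro q hq q' hq' hψ
        simp only [Finset.coe_filter, Set.mem_setOf_eq] at hq hq'
        have hb : Φ q = Φ q' := hq.2.trans hq'.2.symm
        have hb1 : mergeNode K i ∘ q.1 = mergeNode K i ∘ q'.1 := congrArg Prod.fst hb
        have hb2 : mergeNode K i ∘ q.2 = mergeNode K i ∘ q'.2 := congrArg Prod.snd hb
        have hm1 := congrArg Prod.fst hψ
        have hm2 := congrArg Prod.snd hψ
        apply Prod.ext
        · funext j
          exact mergeNode_inj _ _ (congrFun hb1 j)
            (congrArg Fin.val (congrFun hm1 j))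
        · funext j
          exact mergeNode_inj _ _ (congrFun hb2 j)
            (congrArg Fin.val (congrFun hm2 j))
      calc (A.filter (fun q => Φ q = b)).card
          ≤ (Finset.univ : Finset ((Fin k → Fin K) × (Fin k → Fin K))).card := hle
        _ = K ^ (2 * k) := by
            simp [Fintype.card_fun, two_mul, pow_add]
    have himg : A.image Φ ⊆ B := by
      intro b hb
      obtain ⟨q, hq, rfl⟩ := Finset.mem_image.1 hb
      rw [hA, Finset.mem_filter] at hq
      rw [hB, Finset.mem_filter]
      exact ⟨Finset.mem_univ _, merge_matching hK q.1 q.2 r t hq.2⟩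
    calc A.card ≤ K ^ (2 * k) * (A.image Φ).card :=
          Finset.card_le_mul_card_image A _ hfib
      _ ≤ K ^ (2 * k) * B.card :=
          Nat.mul_le_mul_left _ (Finset.card_le_card himg)
  -- conclude by dividing out K^(2k)
  have hKpos : (0 : ℝ) < (K : ℝ) ^ (2 * k) :=
    pow_pos (by exact_mod_cast hK) _
  have h2 : (K : ℝ) ^ (2 * k) * ((1 - δ) * (i : ℝ) ^ (2 * k)) ≤
      (K : ℝ) ^ (2 * k) * (B.card : ℝ) := by
    calc (K : ℝ) ^ (2 * k) * ((1 - δ) * (i : ℝ) ^ (2 * k))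
        = (1 - δ) * ((K * i : ℕ) : ℝ) ^ (2 * k) := by push_cast; ring
      _ ≤ (A.card : ℝ) := hmain
      _ ≤ (K : ℝ) ^ (2 * k) * (B.card : ℝ) := by exact_mod_cast hcount
  exact le_of_mul_le_mul_left h2 hKpos
end
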